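/- For every integer n ≥ 4, there exists a K4-free simple graph F on n vertices with exactly 2n − 3 edges such that every pair of distinct nonadjacent vertices of F is a K4-saturating edge. -/

import Mathlib

open SimpleGraph

/-- `{u, v}` is a `K₄`-saturating edge of `G`: `u ≠ v`, `u` and `v` are nonadjacent, and
adding the edge `uv` to `G` creates a copy of `K₄`. -/
def SatEdge {V : Type*} (G : SimpleGraph V) (u v : V) : Prop :=
  u ≠ v ∧ ¬ G.Adj u v ∧ ¬ (G ⊔ SimpleGraph.fromEdgeSet {s(u, v)}).CliqueFree 4

def myF (n : ℕ) : SimpleGraph (Fin n) where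
  Adj u v := u ≠ v ∧ (u.val ≤ 1 ∨ v.val ≤ 1)
  symm := by
    constructor
    intro u v ⟨h1, h2⟩
    exact ⟨h1.symm, h2.symm⟩
  loopless := by constructor; intro v h; exact h.1 rfl

instance (n : ℕ) : DecidableRel (myF n).Adj :=
  fun u v => decidable_of_iff (u ≠ v ∧ (u.val ≤ 1 ∨ v.val ≤ 1)) Iff.rfl

lemma myF_adj (n : ℕ) (u v : Fin n) :
    (myF n).Adj u v ↔ u ≠ v ∧ (u.val ≤ 1 ∨ v.val ≤ 1) := Iff.rfl

lemma myF_cliquefree (n : ℕ) : (myF n).CliqueFree 4 := by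
  intro s hs
  have hlow : (s.filter (fun x => x.val ≤ 1)).card ≤ 2 := by
    have hinj : Set.InjOn (fun x : Fin n => (⟨min x.val 1, by omega⟩ : Fin 2))
        (s.filter (fun x => x.val ≤ 1)) := by
      intro x hx y hy hxy
      simp only [Finset.coe_filter, Set.mem_setOf_eq] at hx hy
      have : min x.val 1 = min y.val 1 := congrArg Fin.val hxy
      exact Fin.ext (by omega)
    have := Finset.card_le_card_of_injOn _ (fun x _ => Finset.mem_univ _) hinj
    simpa using this
  have hsplit := Finset.card_filter_add_card_filter_not
    (s := s) (p := fun x : Fin n => x.val ≤ 1)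
  have hcard : s.card = 4 := hs.2
  obtain ⟨a, ha, b, hb, hab⟩ := Finset.one_lt_card.mp (by omega :
    1 < (s.filter (fun x : Fin n => ¬ x.val ≤ 1)).card)
  simp only [Finset.mem_filter] at ha hb
  have hadj := hs.1 ha.1 hb.1 hab
  rw [myF_adj] at hadj
  omega

theorem stmt14 (n : ℕ) (hn : 4 ≤ n) :
    ∃ F : SimpleGraph (Fin n), F.CliqueFree 4 ∧
      F.edgeSet.ncard = 2 * n - 3 ∧
      ∀ u v : Fin n, u ≠ v → ¬ F.Adj u v → SatEdge F u v := by
  have h0 : (0:ℕ) < n := by omega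
  have h1 : (1:ℕ) < n := by omega
  set z : Fin n := ⟨0, h0⟩ with hzdef
  set o : Fin n := ⟨1, h1⟩ with hodef
  have hzo : z ≠ o := by simp [hzdef, hodef, Fin.ext_iff]
  have hzval : z.val = 0 := rfl
  have hoval : o.val = 1 := rfl
  have val_le_one : ∀ x : Fin n, x.val ≤ 1 → x = z ∨ x = o := by
    intro x hx
    rcases Nat.le_one_iff_eq_zero_or_eq_one.mp hx with h | h
    · exact Or.inl (Fin.ext (by omega))
    · exact Or.inr (Fin.ext (by omega))
  refine ⟨myF n, myF_cliquefree n, ?_, ?_⟩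
  · -- edge count
    have hfin : (myF n).edgeSet.ncard = (myF n).edgeFinset.card := by
      rw [SimpleGraph.edgeFinset, Set.ncard_eq_toFinset_card']
    rw [hfin]
    have hE : (myF n).edgeFinset =
        ((Finset.univ.erase z).image fun w => s(z, w)) ∪
        (((Finset.univ.erase z).erase o).image fun w => s(o, w)) := by
      ext e
      induction e using Sym2.ind with
      | _ x y =>
        simp only [mem_edgeFinset, mem_edgeSet, myF_adj, Finset.mem_union,
          Finset.mem_image, Finset.mem_erase, Finset.mem_univ, and_true,
          Sym2.eq, Sym2.rel_iff', Prod.mk.injEq, Prod.swap_prod_mk]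
        constructor
        · rintro ⟨hne, hle⟩
          rcases hle with hx | hy
          · rcases val_le_one x hx with rfl | rfl
            · exact Or.inl ⟨y, Ne.symm hne, Or.inl ⟨rfl, rfl⟩⟩
            · by_cases hyz : y = z
              · subst hyz
                exact Or.inl ⟨o, Ne.symm hzo, Or.inr ⟨rfl, rfl⟩⟩
              · exact Or.inr ⟨y, ⟨Ne.symm hne, hyz⟩, Or.inl ⟨rfl, rfl⟩⟩
          · rcases val_le_one y hy with rfl | rfl
            · exact Or.inl ⟨x, hne, Or.inr ⟨rfl, rfl⟩⟩
            · by_cases hxz : x = z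
              · subst hxz
                exact Or.inl ⟨o, Ne.symm hzo, Or.inl ⟨rfl, rfl⟩⟩
              · exact Or.inr ⟨x, ⟨hne, hxz⟩, Or.inr ⟨rfl, rfl⟩⟩
        · rintro (⟨w, hw, (⟨rfl, rfl⟩ | ⟨rfl, rfl⟩)⟩ |
            ⟨w, ⟨hwo, hwz⟩, (⟨rfl, rfl⟩ | ⟨rfl, rfl⟩)⟩)
          · exact ⟨Ne.symm hw, Or.inl (by omega)⟩
          · exact ⟨hw, Or.inr (by omega)⟩
          · exact ⟨Ne.symm hwo, Or.inl (by omega)⟩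
          · exact ⟨hwo, Or.inr (by omega)⟩
    rw [hE]
    have hdisj : Disjoint ((Finset.univ.erase z).image fun w => s(z, w))
        (((Finset.univ.erase z).erase o).image fun w => s(o, w)) := by
      rw [Finset.disjoint_left]
      rintro e he1 he2
      obtain ⟨a, ha, rfl⟩ := Finset.mem_image.mp he1
      obtain ⟨b, hb, hba⟩ := Finset.mem_image.mp he2
      rw [Finset.mem_erase] at ha
      rw [Finset.mem_erase, Finset.mem_erase] at hb
      rw [Sym2.eq_iff] at hba
      rcases hba with ⟨h1, h2⟩ | ⟨h1, h2⟩
      · exact hzo h1.symm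
      · exact hb.2.1 h2
    rw [Finset.card_union_of_disjoint hdisj]
    rw [Finset.card_image_of_injOn, Finset.card_image_of_injOn]
    · rw [Finset.card_erase_of_mem (Finset.mem_univ z),
        Finset.card_erase_of_mem (Finset.mem_erase.mpr ⟨Ne.symm hzo, Finset.mem_univ o⟩),
        Finset.card_erase_of_mem (Finset.mem_univ z), Finset.card_univ, Fintype.card_fin]
      omega
    · intro a ha b hb hab
      simp only [Finset.coe_erase, Finset.coe_univ, Set.mem_diff, Set.mem_univ,
        true_and, Set.mem_singleton_iff] at ha hb
      rw [Sym2.eq_iff] at hab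
      rcases hab with ⟨_, h⟩ | ⟨h1, h2⟩
      · exact h
      · exact absurd h2 ha.2
    · intro a ha b hb hab
      simp only [Finset.coe_erase, Finset.coe_univ, Set.mem_diff, Set.mem_univ,
        true_and, Set.mem_singleton_iff] at ha hb
      rw [Sym2.eq_iff] at hab
      rcases hab with ⟨_, h⟩ | ⟨h1, h2⟩
      · exact h
      · exact absurd h2 ha
  · -- saturating edges
    intro u v huv hnadj
    refine ⟨huv, hnadj, ?_⟩
    rw [myF_adj] at hnadj
    push_neg at hnadj
    have hu2 : 2 ≤ u.val := by
      by_contra h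
      exact absurd (hnadj huv).1 (by omega)
    have hv2 : 2 ≤ v.val := by
      by_contra h
      exact absurd (hnadj huv).2 (by omega)
    have huv' : u.val ≠ v.val := fun h => huv (Fin.ext h)
    intro hcf
    apply hcf {z, o, u, v}
    constructor
    · intro a ha b hb hab
      simp only [Finset.coe_insert, Set.mem_insert_iff, Finset.coe_singleton,
        Set.mem_singleton_iff] at ha hb
      simp only [SimpleGraph.sup_adj, fromEdgeSet_adj, Set.mem_singleton_iff,
        myF_adj]
      rcases ha with rfl | rfl | rfl | rfl <;> rcases hb with rfl | rfl | rfl | rfl <;>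
        first
          | exact absurd rfl hab
          | (left; exact ⟨hab, by simp only [hzval, hoval]; omega⟩)
          | (right; exact ⟨by rw [Sym2.eq_iff]; tauto, hab⟩)
    · rw [Finset.card_insert_of_notMem, Finset.card_insert_of_notMem,
        Finset.card_insert_of_notMem, Finset.card_singleton]
      · simp only [Finset.mem_singleton, Fin.ext_iff]
        omega
      · simp only [Finset.mem_insert, Finset.mem_singleton, Fin.ext_iff, hoval]
        omega
      · simp only [Finset.mem_insert, Finset.mem_singleton, Fin.ext_iff, hzval, hoval]
        omega
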